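/- (Theorem 1, single-neuron form.) Let θ > 0, let T ≥ 1 and L ≥ 1 be natural numbers, and let δ ∈ ℝ. For each real input z, let an integrate-and-fire neuron with threshold θ, constant per-step input z, and initial membrane potential v_z(0) = θ/2 evolve for t = 1, …, T by u_z(t) = v_z(t-1) + z, s_z(t) = 1 if u_z(t) ≥ θ else 0, and v_z(t) = u_z(t) - θ·s_z(t), and let φ_z(T) = (θ/T)·∑_{t=1}^{T} s_z(t) be its average postsynaptic potential. Assume that for every z ∈ [0, θ] the residual membrane potential satisfies 0 ≤ v_z(T) < θ. Let μ be the uniform probability measure on [0, θ] and γ the standard Gaussian measure on ℝ. Then the conversion error ε(z, g) = φ_z(T) - (θ·clip((1/L)·⌊z·L/θ + 1/2⌋, 0, 1) + δ·g) between the converted SNN and the source ANN with Noisy Quantized activation has zero expectation: ∫ ε d(μ ⊗ γ) = 0, for every T, L, and δ. -/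

import Mathlib

open MeasureTheory ProbabilityTheory

lemma round_symm {n : ℤ} {x : ℝ} (h : x - 1/2 ∉ Set.range (Int.cast : ℤ → ℝ)) :
    ((round ((n:ℝ) - x) : ℤ) : ℝ) = n - round x := by
  have h1 : (⌈x - 1/2⌉ : ℝ) = (⌊x - 1/2⌋ : ℝ) + 1 := by
    have hf : Int.fract (x - 1/2) ≠ 0 := by
      intro hc
      exact h ⟨⌊x - 1/2⌋, by have := Int.fract_add_floor (x - 1/2); rw [hc, zero_add] at this; exact this⟩
    rw [Int.ceil_eq_add_one_sub_fract hf, Int.fract]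
    push_cast; ring
  have h2 : round ((n:ℝ) - x) = n + ⌊1/2 - x⌋ := by
    rw [round_eq, show (n:ℝ) - x + 1/2 = (n:ℝ) + (1/2 - x) by ring, Int.floor_intCast_add]
  have h3 : (⌊(1:ℝ)/2 - x⌋ : ℝ) = -(⌈x - 1/2⌉ : ℝ) := by
    rw [show (1:ℝ)/2 - x = -(x - 1/2) by ring, Int.floor_neg]; push_cast; ring
  have h4 : (round x : ℝ) = (⌊x - 1/2⌋ : ℝ) + 1 := by
    rw [round_eq, show x + 1/2 = x - 1/2 + 1 by ring, Int.floor_add_one]; push_cast; ring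
  rw [h2]; push_cast
  rw [h3, h1, h4]; ring

lemma roundfn_mono {θ : ℝ} (hθ : 0 < θ) (n : ℕ) :
    Monotone (fun z : ℝ => ((round ((n:ℝ) * z / θ) : ℤ) : ℝ)) := by
  intro a b hab
  have h1 : (n:ℝ) * a / θ ≤ (n:ℝ) * b / θ := by gcongr
  simp only [round_eq]
  exact Int.cast_le.mpr (Int.floor_mono (by linarith))

lemma round_integral {θ : ℝ} (hθ : 0 < θ) {n : ℕ} (hn : 1 ≤ n) :
    ∫ z in Set.Icc (0:ℝ) θ, ((round ((n:ℝ) * z / θ) : ℤ) : ℝ) = n * θ / 2 := by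
  set g : ℝ → ℝ := fun z => ((round ((n:ℝ) * z / θ) : ℤ) : ℝ) with hg
  have hmono : Monotone g := roundfn_mono hθ n
  have hint : IntervalIntegrable g volume 0 θ :=
    (hmono.monotoneOn _).intervalIntegrable
  have hint2 : IntervalIntegrable (fun z => g (θ - z)) volume 0 θ := by
    have : AntitoneOn (fun z => g (θ - z)) (Set.uIcc 0 θ) := by
      intro a _ b _ hab
      exact hmono (by linarith)
    exact this.intervalIntegrable
  -- bad set
  set S : Set ℝ := (fun z => (n:ℝ) * z / θ - 1/2) ⁻¹' (Set.range (Int.cast : ℤ → ℝ)) with hS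
  have hScount : S.Countable := by
    have : S ⊆ Set.range (fun k : ℤ => ((k:ℝ) + 1/2) * θ / n) := by
      intro z hz
      obtain ⟨k, hk⟩ := hz
      refine ⟨k, ?_⟩
      have hn' : (0:ℝ) < n := by exact_mod_cast hn
      field_simp at hk ⊢
      nlinarith [hk]
    exact Set.Countable.mono this (Set.countable_range _)
  have hkey : ∀ᵐ z ∂volume, z ∈ Set.uIoc (0:ℝ) θ → g z + g (θ - z) = n := by
    filter_upwards [measure_eq_zero_iff_ae_notMem.mp (hScount.measure_zero volume)] with z hz _
    have hx : (n:ℝ) * z / θ - 1/2 ∉ Set.range (Int.cast : ℤ → ℝ) := hz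
    have : (n:ℝ) * (θ - z) / θ = (n:ℝ) - (n:ℝ) * z / θ := by field_simp
    simp only [hg, this]
    have := round_symm (n := (n:ℤ)) (x := (n:ℝ) * z / θ) (by push_cast; exact hx)
    push_cast at this ⊢
    rw [this]; ring
  have e1 : (∫ z in (0:ℝ)..θ, g (θ - z)) = ∫ z in (0:ℝ)..θ, g z := by
    rw [intervalIntegral.integral_comp_sub_left g θ]
    norm_num
  have e2 : (∫ z in (0:ℝ)..θ, (g z + g (θ - z))) = n * θ := by
    rw [intervalIntegral.integral_congr_ae hkey]
    simp [mul_comm]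
  rw [intervalIntegral.integral_add hint hint2, e1] at e2
  have e3 : (∫ z in (0:ℝ)..θ, g z) = n * θ / 2 := by linarith
  rw [MeasureTheory.integral_Icc_eq_integral_Ioc,
    ← intervalIntegral.integral_of_le hθ.le]
  exact e3

lemma integrable_id_gaussian : Integrable (fun x : ℝ => x) (gaussianReal 0 1) := by
  rw [gaussianReal_of_var_ne_zero 0 one_ne_zero]
  rw [integrable_withDensity_iff (measurable_gaussianPDF 0 1)
    (Filter.Eventually.of_forall fun x => ENNReal.ofReal_lt_top)]
  have : (fun x : ℝ => x * (gaussianPDF 0 1 x).toReal)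
      = fun x : ℝ => ((Real.sqrt (2 * Real.pi))⁻¹) * (x * Real.exp (-(1/2) * x ^ 2)) := by
    funext x
    rw [gaussianPDF, ENNReal.toReal_ofReal (gaussianPDFReal_nonneg 0 1 x), gaussianPDFReal]
    push_cast
    ring_nf
  rw [this]
  exact (integrable_mul_exp_neg_mul_sq (by norm_num : (0:ℝ) < 1/2)).const_mul _

lemma integral_id_gaussian : ∫ x, x ∂(gaussianReal 0 1) = 0 := by
  have hmap : Measure.map (fun x : ℝ => (-1 : ℝ) * x) (gaussianReal 0 1) = gaussianReal 0 1 := by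
    rw [gaussianReal_map_const_mul (-1)]
    norm_num
  have h : ∫ x, x ∂(gaussianReal 0 1) = ∫ x, (-1 : ℝ) * x ∂(gaussianReal 0 1) := by
    conv_lhs => rw [← hmap]
    exact integral_map (by fun_prop) measurable_id.aestronglyMeasurable
  rw [show (fun x : ℝ => (-1:ℝ) * x) = fun x : ℝ => -(id x) by funext x; simp, integral_neg] at h
  simp only [id] at h
  linarith

/-- Theorem 1 (single-neuron form). For each input `z`, an IF neuron with threshold
`θ > 0`, constant per-step input `z`, and initial potential `θ/2` evolves by charging,
Heaviside firing, and reset-by-subtraction. If the residual potential satisfies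
`0 ≤ v_z T < θ` for every `z ∈ [0, θ]`, then the conversion error between the SNN
average postsynaptic potential and the source ANN's Noisy Quantized activation has
zero expectation under (uniform on `[0, θ]`) ⊗ (standard Gaussian). -/
theorem nq_conversion_error_zero_expectation (θ : ℝ) (hθ : 0 < θ)
    (T L : ℕ) (hT : 1 ≤ T) (hL : 1 ≤ L) (δ : ℝ)
    (u s v : ℝ → ℕ → ℝ)
    (hv0 : ∀ z : ℝ, v z 0 = θ / 2)
    (hu : ∀ z : ℝ, ∀ t : ℕ, 1 ≤ t → u z t = v z (t - 1) + z)
    (hs : ∀ z : ℝ, ∀ t : ℕ, 1 ≤ t → s z t = if θ ≤ u z t then 1 else 0)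
    (hv : ∀ z : ℝ, ∀ t : ℕ, 1 ≤ t → v z t = u z t - θ * s z t)
    (hres : ∀ z ∈ Set.Icc (0 : ℝ) θ, 0 ≤ v z T ∧ v z T < θ) :
    ∫ p : ℝ × ℝ,
        ((θ / (T : ℝ)) * (∑ t ∈ Finset.Icc 1 T, s p.1 t)
          - (θ * min 1 (max 0 ((1 / (L : ℝ)) * ((⌊p.1 * L / θ + 1 / 2⌋ : ℤ) : ℝ)))
              + δ * p.2))
      ∂(((ENNReal.ofReal θ)⁻¹ • volume.restrict (Set.Icc (0 : ℝ) θ)).prod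
          (gaussianReal 0 1)) = 0 := by
  have hθ0 : ENNReal.ofReal θ ≠ 0 := by simp [hθ, hθ.not_gt] <;> positivity
  have hθt : ENNReal.ofReal θ ≠ ⊤ := ENNReal.ofReal_ne_top
  set μ : Measure ℝ := (ENNReal.ofReal θ)⁻¹ • volume.restrict (Set.Icc (0 : ℝ) θ) with hμdef
  set γ : Measure ℝ := gaussianReal 0 1 with hγdef
  have hμuniv : μ Set.univ = 1 := by
    rw [hμdef, Measure.smul_apply, Measure.restrict_apply MeasurableSet.univ,
      Set.univ_inter, Real.volume_Icc, smul_eq_mul, sub_zero]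
    exact ENNReal.inv_mul_cancel hθ0 hθt
  haveI hμprob : IsProbabilityMeasure μ := ⟨hμuniv⟩
  -- Step 1: telescoping
  have hsum : ∀ z : ℝ, ∀ n : ℕ,
      v z n = θ / 2 + n * z - θ * ∑ t ∈ Finset.Icc 1 n, s z t := by
    intro z n
    induction n with
    | zero => simp [hv0]
    | succ k ih =>
      rw [Finset.sum_Icc_succ_top (by omega), hv z (k+1) (by omega), hu z (k+1) (by omega)]
      simp only [Nat.add_sub_cancel]
      rw [ih]
      push_cast
      ring
  -- Step 2: spike count equals round
  have hspike : ∀ z ∈ Set.Icc (0 : ℝ) θ,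
      (∑ t ∈ Finset.Icc 1 T, s z t) = ((round ((T:ℝ) * z / θ) : ℤ) : ℝ) := by
    intro z hz
    have hkrep : (∑ t ∈ Finset.Icc 1 T, s z t)
        = ((∑ t ∈ Finset.Icc 1 T, if θ ≤ u z t then (1:ℤ) else 0 : ℤ) : ℝ) := by
      rw [Int.cast_sum]
      refine Finset.sum_congr rfl fun t ht => ?_
      rw [hs z t (Finset.mem_Icc.mp ht).1]
      split <;> simp
    set k : ℤ := ∑ t ∈ Finset.Icc 1 T, if θ ≤ u z t then (1:ℤ) else 0 with hk
    rw [hkrep]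
    congr 1
    have hvT := hsum z T
    rw [hkrep] at hvT
    obtain ⟨hr0, hr1⟩ := hres z hz
    rw [hvT] at hr0 hr1
    have hTz : (T:ℝ) * z / θ * θ = (T:ℝ) * z := div_mul_cancel₀ _ (ne_of_gt hθ)
    rw [round_eq]
    symm
    rw [Int.floor_eq_iff]
    constructor
    · nlinarith
    · push_cast
      nlinarith
  -- Step 3: clip is identity
  have hclip : ∀ z ∈ Set.Icc (0 : ℝ) θ,
      min 1 (max 0 ((1 / (L : ℝ)) * ((⌊z * L / θ + 1 / 2⌋ : ℤ) : ℝ)))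
        = (1 / (L:ℝ)) * ((round ((L:ℝ) * z / θ) : ℤ) : ℝ) := by
    intro z hz
    obtain ⟨hz0, hz1⟩ := hz
    have hL0 : (0:ℝ) < L := by exact_mod_cast hL
    have harg0 : (0:ℝ) ≤ z * L / θ + 1/2 := by positivity
    have hf0 : (0:ℤ) ≤ ⌊z * L / θ + 1/2⌋ := Int.floor_nonneg.mpr harg0
    have hfL : ⌊z * L / θ + 1/2⌋ ≤ (L:ℤ) := by
      rw [← Int.lt_add_one_iff, Int.floor_lt]
      push_cast
      have : z * L / θ ≤ L := by
        rw [div_le_iff₀ hθ]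
        nlinarith
      linarith
    have h0 : (0:ℝ) ≤ (1 / (L : ℝ)) * ((⌊z * L / θ + 1 / 2⌋ : ℤ) : ℝ) := by
      have : (0:ℝ) ≤ ((⌊z * L / θ + 1 / 2⌋ : ℤ) : ℝ) := by exact_mod_cast hf0
      positivity
    have h1 : (1 / (L : ℝ)) * ((⌊z * L / θ + 1 / 2⌋ : ℤ) : ℝ) ≤ 1 := by
      have : ((⌊z * L / θ + 1 / 2⌋ : ℤ) : ℝ) ≤ (L:ℝ) := by exact_mod_cast hfL
      rw [div_mul_eq_mul_div, div_le_one hL0]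
      linarith
    rw [max_eq_right h0, min_eq_right h1, round_eq]
    congr 3
    ring
  -- the replacement function
  set F : ℝ → ℝ := fun z => (θ / (T:ℝ)) * ((round ((T:ℝ) * z / θ) : ℤ) : ℝ)
      - θ * ((1 / (L:ℝ)) * ((round ((L:ℝ) * z / θ) : ℤ) : ℝ)) with hF
  -- a.e. membership
  have haemem : ∀ᵐ p : ℝ × ℝ ∂(μ.prod γ), p.1 ∈ Set.Icc (0:ℝ) θ := by
    rw [MeasureTheory.ae_iff]
    have hset : {p : ℝ × ℝ | ¬ p.1 ∈ Set.Icc (0:ℝ) θ}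
        = (Set.Icc (0:ℝ) θ)ᶜ ×ˢ Set.univ := by
      ext p; simp [Set.mem_prod]
    rw [hset, Measure.prod_prod]
    have : μ (Set.Icc (0:ℝ) θ)ᶜ = 0 := by
      rw [hμdef, Measure.smul_apply,
        Measure.restrict_apply (measurableSet_Icc.compl), Set.compl_inter_self]
      simp
    rw [this, zero_mul]
  have haeeq : ∀ᵐ p : ℝ × ℝ ∂(μ.prod γ),
      ((θ / (T : ℝ)) * (∑ t ∈ Finset.Icc 1 T, s p.1 t)
          - (θ * min 1 (max 0 ((1 / (L : ℝ)) * ((⌊p.1 * L / θ + 1 / 2⌋ : ℤ) : ℝ)))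
              + δ * p.2))
        = F p.1 - δ * p.2 := by
    filter_upwards [haemem] with p hp
    rw [hspike p.1 hp, hclip p.1 hp, hF]
    ring
  rw [integral_congr_ae haeeq]
  -- measurability of F
  have hFmeas : Measurable F := by
    rw [hF]
    exact (((roundfn_mono hθ T).measurable).const_mul _).sub
      ((((roundfn_mono hθ L).measurable).const_mul _).const_mul _)
  -- integrability of F over μ
  have hcne : (ENNReal.ofReal θ)⁻¹ ≠ ⊤ := ENNReal.inv_ne_top.mpr hθ0
  have i1 : IntegrableOn (fun z : ℝ => ((round ((T:ℝ) * z / θ) : ℤ) : ℝ)) (Set.Icc 0 θ) volume := by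
    rw [← intervalIntegrable_iff_integrableOn_Icc_of_le hθ.le]
    exact ((roundfn_mono hθ T).monotoneOn _).intervalIntegrable
  have i2 : IntegrableOn (fun z : ℝ => ((round ((L:ℝ) * z / θ) : ℤ) : ℝ)) (Set.Icc 0 θ) volume := by
    rw [← intervalIntegrable_iff_integrableOn_Icc_of_le hθ.le]
    exact ((roundfn_mono hθ L).monotoneOn _).intervalIntegrable
  have hFvolint : IntegrableOn F (Set.Icc 0 θ) volume := by
    rw [hF]
    exact ((i1.const_mul _).sub ((i2.const_mul _).const_mul _))
  have hFint : Integrable F μ := by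
    rw [hμdef]
    exact hFvolint.smul_measure hcne
  have hfst : (μ.prod γ).map Prod.fst = μ := by
    rw [Measure.map_fst_prod, measure_univ, one_smul]
  have hsnd : (μ.prod γ).map Prod.snd = γ := by
    rw [Measure.map_snd_prod, hμuniv, one_smul]
  have hFintp : Integrable (fun p : ℝ × ℝ => F p.1) (μ.prod γ) := by
    have h := (integrable_map_measure hFmeas.aestronglyMeasurable
      measurable_fst.aemeasurable).mp (by rw [hfst]; exact hFint)
    exact h
  have hδint : Integrable (fun x : ℝ => δ * x) γ := integrable_id_gaussian.const_mul δ
  have hsintp : Integrable (fun p : ℝ × ℝ => δ * p.2) (μ.prod γ) := by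
    have h := (integrable_map_measure (by fun_prop : Measurable fun x : ℝ => δ * x).aestronglyMeasurable
      measurable_snd.aemeasurable).mp (by rw [hsnd]; exact hδint)
    exact h
  rw [integral_sub hFintp hsintp]
  have hIF : (∫ p : ℝ × ℝ, F p.1 ∂(μ.prod γ)) = ∫ z, F z ∂μ := by
    conv_rhs => rw [← hfst]
    rw [integral_map measurable_fst.aemeasurable hFmeas.aestronglyMeasurable]
  have hIs : (∫ p : ℝ × ℝ, δ * p.2 ∂(μ.prod γ)) = δ * ∫ x, x ∂γ := by
    have h : (∫ y, δ * y ∂((μ.prod γ).map Prod.snd)) = ∫ p : ℝ × ℝ, δ * p.2 ∂(μ.prod γ) :=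
      integral_map measurable_snd.aemeasurable
        (by fun_prop : Measurable fun x : ℝ => δ * x).aestronglyMeasurable
    rw [← h, hsnd, integral_const_mul]
  rw [hIF, hIs, hγdef, integral_id_gaussian, mul_zero, sub_zero]
  rw [hμdef, integral_smul_measure]
  have hz : (∫ z in Set.Icc (0:ℝ) θ, F z) = 0 := by
    rw [hF]
    rw [integral_sub (i1.const_mul _) ((i2.const_mul _).const_mul _),
      integral_const_mul, integral_const_mul, integral_const_mul,
      round_integral hθ hT, round_integral hθ hL]
    have hT0 : (T:ℝ) ≠ 0 := by positivity
    have hL0 : (L:ℝ) ≠ 0 := by positivity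
    field_simp
    ring
  rw [hz]
  simp
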